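/- Let n ≥ 1 and let M_n be the Mirakjan–Favard–Szász operator, M_n f(x) := e^{−nx} ∑_{k=0}^∞ ((nx)^k / k!)·f(k/n) for x ≥ 0, and set σ_n(x) := e^{−2nx} ∑_{k=0}^∞ (nx)^{2k}/(k!)². Then for all bounded continuous f, g : [0,∞) → ℝ and all x ≥ 0, |M_n(f·g)(x) − M_n f(x)·M_n g(x)| ≤ (1/2)·(1 − σ_n(x))·osc_{M_n}(f)·osc_{M_n}(g), where osc_{M_n}(f) := sup{|f(k/n) − f(l/n)| : 0 ≤ k < l < ∞} and similarly for g. -/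
import Mathlib


/-- The `n`-th Mirakjan–Favard–Szász operator
`M_n f(x) = e^(-nx) ∑_{k=0}^∞ ((nx)^k / k!) f(k/n)`. -/
noncomputable def szaszOp (n : ℕ) (f : ℝ → ℝ) (x : ℝ) : ℝ :=
  Real.exp (-(n * x)) * ∑' k : ℕ, ((n * x) ^ k / (k.factorial : ℝ)) * f (k / n)

/-- `σ_n(x) = e^(-2nx) ∑_{k=0}^∞ (nx)^(2k) / (k!)²`, the sum of squares of the fundamental
functions of the Szász operator. -/
noncomputable def szaszSigma (n : ℕ) (x : ℝ) : ℝ :=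
  Real.exp (-(2 * n * x)) * ∑' k : ℕ, (n * x) ^ (2 * k) / (k.factorial : ℝ) ^ 2

set_option maxHeartbeats 2000000 in
/-- The new Chebyshev-Grüss-type inequality for the Mirakjan–Favard–Szász operator. -/
theorem szasz_chebyshev_gruss (n : ℕ) (hn : 1 ≤ n)
    (f g : ℝ → ℝ)
    (hf : ContinuousOn f (Set.Ici (0:ℝ))) (hg : ContinuousOn g (Set.Ici (0:ℝ)))
    (hfb : ∃ C, ∀ y ∈ Set.Ici (0:ℝ), |f y| ≤ C) (hgb : ∃ C, ∀ y ∈ Set.Ici (0:ℝ), |g y| ≤ C)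
    (x : ℝ) (hx : 0 ≤ x) :
    |szaszOp n (fun t => f t * g t) x - szaszOp n f x * szaszOp n g x| ≤
      (1 / 2) * (1 - szaszSigma n x) *
        sSup {d : ℝ | ∃ k l : ℕ, k < l ∧ d = |f (k / n) - f (l / n)|} *
        sSup {d : ℝ | ∃ k l : ℕ, k < l ∧ d = |g (k / n) - g (l / n)|} := by
  obtain ⟨Cf, hCf⟩ := hfb
  obtain ⟨Cg, hCg⟩ := hgb
  have ha0 : (0:ℝ) ≤ (n : ℝ) * x := mul_nonneg (Nat.cast_nonneg n) hx
  -- fundamental functions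
  set p : ℕ → ℝ := fun k => Real.exp (-((n:ℝ) * x)) * (((n:ℝ) * x) ^ k / k.factorial) with hp
  have hp0 : ∀ k, 0 ≤ p k := fun k =>
    mul_nonneg (Real.exp_pos _).le (div_nonneg (pow_nonneg ha0 k) (Nat.cast_nonneg _))
  have hps : Summable p := (Real.summable_pow_div_factorial ((n:ℝ) * x)).mul_left _
  have hp1 : ∑' k, p k = 1 := by
    rw [hp, tsum_mul_left]
    have h2 : ∑' k : ℕ, ((n:ℝ) * x) ^ k / (k.factorial : ℝ) = Real.exp ((n:ℝ) * x) := by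
      rw [Real.exp_eq_exp_ℝ, NormedSpace.exp_eq_tsum_div]
    rw [h2, ← Real.exp_add]
    simp
  -- values of function arguments are in [0, ∞)
  have hmem : ∀ k : ℕ, ((k : ℝ) / n) ∈ Set.Ici (0:ℝ) :=
    fun k => Set.mem_Ici.mpr (div_nonneg (Nat.cast_nonneg k) (Nat.cast_nonneg n))
  have hFb : ∀ k : ℕ, |f ((k:ℝ) / n)| ≤ Cf := fun k => hCf _ (hmem k)
  have hGb : ∀ k : ℕ, |g ((k:ℝ) / n)| ≤ Cg := fun k => hCg _ (hmem k)
  have hCf0 : 0 ≤ Cf := (abs_nonneg _).trans (hFb 0)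
  have hCg0 : 0 ≤ Cg := (abs_nonneg _).trans (hGb 0)
  -- summability helper
  have sumAux : ∀ (u : ℕ → ℝ) (C : ℝ), (∀ k, |u k| ≤ C) →
      Summable (fun k => ‖p k * u k‖) := by
    intro u C hu
    apply Summable.of_nonneg_of_le (fun k => norm_nonneg _) _ (hps.mul_right C)
    intro k
    rw [Real.norm_eq_abs, abs_mul, abs_of_nonneg (hp0 k)]
    exact mul_le_mul_of_nonneg_left (hu k) (hp0 k)
  have hFGb : ∀ k : ℕ, |f ((k:ℝ)/n) * g ((k:ℝ)/n)| ≤ Cf * Cg := by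
    intro k
    rw [abs_mul]
    exact mul_le_mul (hFb k) (hGb k) (abs_nonneg _) hCf0
  have sumF' : Summable (fun k : ℕ => ‖p k * f ((k:ℝ)/n)‖) := sumAux _ Cf hFb
  have sumG' : Summable (fun k : ℕ => ‖p k * g ((k:ℝ)/n)‖) := sumAux _ Cg hGb
  have sumFG' : Summable (fun k : ℕ => ‖p k * (f ((k:ℝ)/n) * g ((k:ℝ)/n))‖) :=
    sumAux _ (Cf * Cg) hFGb
  have sumP' : Summable (fun k : ℕ => ‖p k‖) := by
    simpa only [Real.norm_eq_abs, abs_of_nonneg (hp0 _)] using hps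
  have sumF : Summable (fun k : ℕ => p k * f ((k:ℝ)/n)) := sumF'.of_norm
  have sumG : Summable (fun k : ℕ => p k * g ((k:ℝ)/n)) := sumG'.of_norm
  have sumFG : Summable (fun k : ℕ => p k * (f ((k:ℝ)/n) * g ((k:ℝ)/n))) := sumFG'.of_norm
  -- express operator values
  have hM : ∀ h : ℝ → ℝ, szaszOp n h x = ∑' k : ℕ, p k * h ((k:ℝ) / n) := by
    intro h
    rw [szaszOp, ← tsum_mul_left]
    exact tsum_congr fun k => (mul_assoc _ _ _).symm
  -- the double sum
  set T : ℝ := ∑' z : ℕ × ℕ, p z.1 * p z.2 * (f ((z.1:ℝ)/n) - f ((z.2:ℝ)/n)) *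
      (g ((z.1:ℝ)/n) - g ((z.2:ℝ)/n)) with hT
  -- summability of the four product pieces
  have s1 : Summable (fun z : ℕ × ℕ => (p z.1 * (f ((z.1:ℝ)/n) * g ((z.1:ℝ)/n))) * p z.2) :=
    summable_mul_of_summable_norm sumFG' sumP'
  have s2 : Summable (fun z : ℕ × ℕ => (p z.1 * f ((z.1:ℝ)/n)) * (p z.2 * g ((z.2:ℝ)/n))) :=
    summable_mul_of_summable_norm sumF' sumG'
  have s3 : Summable (fun z : ℕ × ℕ => (p z.1 * g ((z.1:ℝ)/n)) * (p z.2 * f ((z.2:ℝ)/n))) :=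
    summable_mul_of_summable_norm sumG' sumF'
  have s4 : Summable (fun z : ℕ × ℕ => p z.1 * (p z.2 * (f ((z.2:ℝ)/n) * g ((z.2:ℝ)/n)))) :=
    summable_mul_of_summable_norm sumP' sumFG'
  -- the algebraic identity
  have hkey : szaszOp n (fun t => f t * g t) x - szaszOp n f x * szaszOp n g x
      = (1/2) * T := by
    have hfun : (fun z : ℕ × ℕ => p z.1 * p z.2 * (f ((z.1:ℝ)/n) - f ((z.2:ℝ)/n)) *
        (g ((z.1:ℝ)/n) - g ((z.2:ℝ)/n)))
        = fun z : ℕ × ℕ =>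
          ((p z.1 * (f ((z.1:ℝ)/n) * g ((z.1:ℝ)/n))) * p z.2
            - (p z.1 * f ((z.1:ℝ)/n)) * (p z.2 * g ((z.2:ℝ)/n)))
          - ((p z.1 * g ((z.1:ℝ)/n)) * (p z.2 * f ((z.2:ℝ)/n))
            - p z.1 * (p z.2 * (f ((z.2:ℝ)/n) * g ((z.2:ℝ)/n)))) := by
      funext z; ring
    have hTval : T = 2 * ((∑' k : ℕ, p k * (f ((k:ℝ)/n) * g ((k:ℝ)/n)))
        - (∑' k : ℕ, p k * f ((k:ℝ)/n)) * (∑' k : ℕ, p k * g ((k:ℝ)/n))) := by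
      rw [hT, hfun, Summable.tsum_sub (s1.sub s2) (s3.sub s4), Summable.tsum_sub s1 s2, Summable.tsum_sub s3 s4,
        ← tsum_mul_tsum_of_summable_norm sumFG' sumP',
        ← tsum_mul_tsum_of_summable_norm sumF' sumG',
        ← tsum_mul_tsum_of_summable_norm sumG' sumF',
        ← tsum_mul_tsum_of_summable_norm sumP' sumFG', hp1]
      ring
    rw [hM, hM, hM, hTval]
    ring
  -- suprema
  set Of : ℝ := sSup {d : ℝ | ∃ k l : ℕ, k < l ∧ d = |f ((k:ℝ) / n) - f ((l:ℝ) / n)|} with hOf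
  set Og : ℝ := sSup {d : ℝ | ∃ k l : ℕ, k < l ∧ d = |g ((k:ℝ) / n) - g ((l:ℝ) / n)|} with hOg
  have oscAux : ∀ (h : ℝ → ℝ) (C : ℝ), (∀ k : ℕ, |h ((k:ℝ)/n)| ≤ C) →
      (0 ≤ sSup {d : ℝ | ∃ k l : ℕ, k < l ∧ d = |h ((k:ℝ) / n) - h ((l:ℝ) / n)|}) ∧
      (∀ k l : ℕ, k ≠ l → |h ((k:ℝ)/n) - h ((l:ℝ)/n)| ≤
        sSup {d : ℝ | ∃ k l : ℕ, k < l ∧ d = |h ((k:ℝ) / n) - h ((l:ℝ) / n)|}) := by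
    intro h C hb
    have hbdd : BddAbove {d : ℝ | ∃ k l : ℕ, k < l ∧ d = |h ((k:ℝ) / n) - h ((l:ℝ) / n)|} := by
      refine ⟨C + C, ?_⟩
      rintro d ⟨k, l, hkl, rfl⟩
      calc |h ((k:ℝ)/n) - h ((l:ℝ)/n)| ≤ |h ((k:ℝ)/n)| + |h ((l:ℝ)/n)| := abs_sub _ _
        _ ≤ C + C := add_le_add (hb k) (hb l)
    have hle : ∀ k l : ℕ, k < l → |h ((k:ℝ)/n) - h ((l:ℝ)/n)| ≤
        sSup {d : ℝ | ∃ k l : ℕ, k < l ∧ d = |h ((k:ℝ) / n) - h ((l:ℝ) / n)|} :=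
      fun k l hkl => le_csSup hbdd ⟨k, l, hkl, rfl⟩
    constructor
    · exact (abs_nonneg _).trans (hle 0 1 one_pos)
    · intro k l hkl
      rcases hkl.lt_or_gt with h' | h'
      · exact hle k l h'
      · rw [abs_sub_comm]; exact hle l k h'
  obtain ⟨hOf0, hOfle⟩ := oscAux f Cf hFb
  obtain ⟨hOg0, hOgle⟩ := oscAux g Cg hGb
  -- summability of the majorant
  have spp : Summable (fun z : ℕ × ℕ => p z.1 * p z.2) :=
    hps.mul_of_nonneg hps hp0 hp0
  have sdiag : Summable (fun z : ℕ × ℕ =>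
      if z.1 = z.2 then p z.1 * p z.2 * (Of * Og) else 0) := by
    apply Summable.of_nonneg_of_le _ _ (spp.mul_right (Of * Og))
    · intro z
      split
      · exact mul_nonneg (mul_nonneg (hp0 _) (hp0 _)) (mul_nonneg hOf0 hOg0)
      · exact le_refl 0
    · intro z
      split
      · exact le_refl _
      · exact mul_nonneg (mul_nonneg (hp0 _) (hp0 _)) (mul_nonneg hOf0 hOg0)
  have sq : Summable (fun z : ℕ × ℕ => p z.1 * p z.2 * (Of * Og)
      - if z.1 = z.2 then p z.1 * p z.2 * (Of * Og) else 0) :=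
    (spp.mul_right _).sub sdiag
  -- pointwise bound
  have hpt : ∀ z : ℕ × ℕ, |p z.1 * p z.2 * (f ((z.1:ℝ)/n) - f ((z.2:ℝ)/n)) *
      (g ((z.1:ℝ)/n) - g ((z.2:ℝ)/n))| ≤ p z.1 * p z.2 * (Of * Og)
      - if z.1 = z.2 then p z.1 * p z.2 * (Of * Og) else 0 := by
    intro z
    by_cases hz : z.1 = z.2
    · simp [hz]
    · have h1 := hOfle z.1 z.2 hz
      have h2 := hOgle z.1 z.2 hz
      simp only [hz, if_false, sub_zero]
      calc |p z.1 * p z.2 * (f ((z.1:ℝ)/n) - f ((z.2:ℝ)/n)) *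
            (g ((z.1:ℝ)/n) - g ((z.2:ℝ)/n))|
          = p z.1 * p z.2 * |f ((z.1:ℝ)/n) - f ((z.2:ℝ)/n)| *
            |g ((z.1:ℝ)/n) - g ((z.2:ℝ)/n)| := by
            rw [abs_mul, abs_mul, abs_of_nonneg (mul_nonneg (hp0 _) (hp0 _))]
        _ ≤ p z.1 * p z.2 * Of * Og := by
            gcongr
            all_goals first
              | exact h1
              | exact h2
              | exact mul_nonneg (hp0 _) (hp0 _)
              | exact (abs_nonneg _).trans h2
              | positivity
        _ = p z.1 * p z.2 * (Of * Og) := by ring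
  have hpt' : ∀ z : ℕ × ℕ, ‖p z.1 * p z.2 * (f ((z.1:ℝ)/n) - f ((z.2:ℝ)/n)) *
      (g ((z.1:ℝ)/n) - g ((z.2:ℝ)/n))‖ ≤ p z.1 * p z.2 * (Of * Og)
      - if z.1 = z.2 then p z.1 * p z.2 * (Of * Og) else 0 := by
    intro z; rw [Real.norm_eq_abs]; exact hpt z
  have habs : Summable (fun z : ℕ × ℕ => ‖p z.1 * p z.2 *
      (f ((z.1:ℝ)/n) - f ((z.2:ℝ)/n)) * (g ((z.1:ℝ)/n) - g ((z.2:ℝ)/n))‖) :=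
    Summable.of_nonneg_of_le (fun z => norm_nonneg _) hpt' sq
  -- diagonal sum is sigma
  have hdiag : (∑' z : ℕ × ℕ, if z.1 = z.2 then p z.1 * p z.2 * (Of * Og) else 0)
      = szaszSigma n x * (Of * Og) := by
    have hinj : Function.Injective (fun k : ℕ => ((k, k) : ℕ × ℕ)) := by
      intro a b hab
      simpa using congrArg Prod.fst hab
    have hsupp : Function.support (fun z : ℕ × ℕ =>
        if z.1 = z.2 then p z.1 * p z.2 * (Of * Og) else 0)
        ⊆ Set.range (fun k : ℕ => ((k, k) : ℕ × ℕ)) := by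
      intro z hz
      simp only [Function.mem_support] at hz
      by_cases h : z.1 = z.2
      · exact ⟨z.1, by rw [Prod.ext_iff]; exact ⟨rfl, h⟩⟩
      · simp [h] at hz
    rw [← hinj.tsum_eq hsupp]
    simp only [↓reduceIte]
    have hpk : ∀ k : ℕ, p k * p k = Real.exp (-(2 * (n:ℝ) * x)) *
        (((n:ℝ) * x) ^ (2 * k) / (k.factorial : ℝ) ^ 2) := by
      intro k
      have he : Real.exp (-((n:ℝ) * x)) * Real.exp (-((n:ℝ) * x))
          = Real.exp (-(2 * (n:ℝ) * x)) := by
        rw [← Real.exp_add]; congr 1; ring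
      rw [hp]
      simp only
      rw [show 2 * k = k + k by ring, pow_add, ← he]
      ring
    have : (fun k : ℕ => p k * p k * (Of * Og))
        = fun k : ℕ => (Real.exp (-(2 * (n:ℝ) * x)) *
          (((n:ℝ) * x) ^ (2 * k) / (k.factorial : ℝ) ^ 2)) * (Of * Og) := by
      funext k; rw [hpk k]
    rw [this]
    rw [tsum_mul_right, tsum_mul_left, szaszSigma]
  -- total of majorant
  have hsum_pp : (∑' z : ℕ × ℕ, p z.1 * p z.2) = 1 := by
    rw [← tsum_mul_tsum_of_summable_norm sumP' sumP', hp1]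
    norm_num
  have hmaj : (∑' z : ℕ × ℕ, (p z.1 * p z.2 * (Of * Og)
      - if z.1 = z.2 then p z.1 * p z.2 * (Of * Og) else 0))
      = (1 - szaszSigma n x) * (Of * Og) := by
    rw [Summable.tsum_sub (spp.mul_right _) sdiag, tsum_mul_right, hsum_pp, hdiag]
    ring
  -- bound on T
  have hTbound : |T| ≤ (1 - szaszSigma n x) * (Of * Og) := by
    calc |T| ≤ ∑' z : ℕ × ℕ, ‖p z.1 * p z.2 *
        (f ((z.1:ℝ)/n) - f ((z.2:ℝ)/n)) * (g ((z.1:ℝ)/n) - g ((z.2:ℝ)/n))‖ := by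
          rw [hT, ← Real.norm_eq_abs]
          exact norm_tsum_le_tsum_norm habs
      _ ≤ ∑' z : ℕ × ℕ, (p z.1 * p z.2 * (Of * Og)
          - if z.1 = z.2 then p z.1 * p z.2 * (Of * Og) else 0) :=
          Summable.tsum_le_tsum hpt' habs sq
      _ = (1 - szaszSigma n x) * (Of * Og) := hmaj
  rw [hkey, abs_mul]
  rw [show |(1:ℝ)/2| = 1/2 by norm_num]
  calc (1/2) * |T| ≤ (1/2) * ((1 - szaszSigma n x) * (Of * Og)) := by linarith
    _ = 1 / 2 * (1 - szaszSigma n x) * Of * Og := by ring
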